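/- arXiv:2102.13306 — 3 statements merged into one kernel-verified Lean document; each statement's English description precedes it below -/
import Mathlib

section
/- f_{s,s+t}(n) = n − t for all integers s, t, n with s > ⌊(n−t+1)/2⌋ and s+t ≤ n+1, where f_{s,s+t}(n) is the Erdős–Rogers function. -/
open SimpleGraph Set

/-- The independence number of `G` restricted to a vertex subset `A`:
the largest cardinality of a finite set of vertices inside `A` that is
pairwise non-adjacent in `G`. -/
noncomputable def indepNumOn {V : Type*} (G : SimpleGraph V) (A : Set V) : ℕ :=
  sSup {n | ∃ s : Finset V, ↑s ⊆ A ∧ s.card = n ∧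
    ∀ x ∈ s, ∀ y ∈ s, x ≠ y → ¬ G.Adj x y}

/-- The independence number of `G`. -/
noncomputable def indepNum {V : Type*} (G : SimpleGraph V) : ℕ :=
  indepNumOn G Set.univ

/-- `G` is `(k, l)`-stable: removing any `k` vertices decreases the
independence number by at most `l`. -/
def IsStable {V : Type*} (G : SimpleGraph V) (k l : ℕ) : Prop :=
  ∀ S : Finset V, S.card = k → _root_.indepNum G ≤ indepNumOn G (↑S : Set V)ᶜ + l

/-- The largest size of a vertex subset of `G` inducing a `Kₛ`-free subgraph. -/
noncomputable def maxKsFreeSub (n s : ℕ) (G : SimpleGraph (Fin n)) : ℕ :=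
  sSup {m | ∃ S : Finset (Fin n), S.card = m ∧
    ∀ T : Finset (Fin n), T ⊆ S → ¬ G.IsNClique s T}

/-- The Erdős–Rogers function `f_{s,r}(n)`: the minimum over `K_r`-free graphs `G` on
`n` vertices of the largest size of a vertex set inducing a `Kₛ`-free subgraph. -/
noncomputable def erdosRogers (s r n : ℕ) : ℕ :=
  sInf {k | ∃ G : SimpleGraph (Fin n), G.CliqueFree r ∧ k = maxKsFreeSub n s G}


lemma ER_clique_subset {V : Type*} {G : SimpleGraph V} {C : Finset V} (hC : G.IsClique ↑C)
    {k : ℕ} (hk : k ≤ C.card) : ∃ T ⊆ C, G.IsNClique k T := by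
  obtain ⟨T, hTC, hTcard⟩ := Finset.exists_subset_card_eq hk
  exact ⟨T, hTC, ⟨hC.subset (Finset.coe_subset.mpr hTC), hTcard⟩⟩

lemma ER_hajnal_family {N : ℕ} (G : SimpleGraph (Fin N)) (V : Finset (Fin N)) (ω : ℕ)
    (hfree : ∀ T ⊆ V, ¬ G.IsNClique (ω + 1) T)
    (𝒦 : Finset (Finset (Fin N))) (h𝒦 : 𝒦.Nonempty) :
    (∀ K ∈ 𝒦, K ⊆ V ∧ G.IsNClique ω K) →
    ∃ J : Finset (Fin N), (∀ K ∈ 𝒦, J ⊆ K) ∧ 2 * ω ≤ (𝒦.sup id).card + J.card := by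
  induction h𝒦 using Finset.Nonempty.cons_induction with
  | singleton K =>
    intro hmem
    have hc := (hmem K (Finset.mem_singleton_self K)).2.card_eq
    refine ⟨K, fun K' hK' => by rw [Finset.mem_singleton.mp hK'], ?_⟩
    rw [Finset.sup_singleton]
    simp only [id]
    omega
  | cons K₀ 𝒦 hK₀ h𝒦 ih =>
    intro hmem
    have hmem' : ∀ K ∈ 𝒦, K ⊆ V ∧ G.IsNClique ω K :=
      fun K hK => hmem K (Finset.mem_cons_of_mem hK)
    obtain ⟨I, hIK, ihh⟩ := ih hmem'
    obtain ⟨hK₀V, hK₀cl⟩ := hmem K₀ (Finset.mem_cons_self _ _)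
    set U := 𝒦.sup id with hU
    obtain ⟨K₁, hK₁⟩ := h𝒦
    have hIV : I ⊆ V := (hIK K₁ hK₁).trans (hmem' K₁ hK₁).1
    have hUV : U ⊆ V := Finset.le_iff_subset.mp
      (Finset.sup_le fun K hK => Finset.le_iff_subset.mpr (hmem' K hK).1)
    -- key claim
    have key : (I \ K₀).card ≤ (K₀ \ U).card := by
      by_contra hcon
      push_neg at hcon
      have hdisj : Disjoint (K₀ ∩ U) (I \ K₀) := by
        apply Finset.disjoint_left.mpr
        intro a ha ha'
        exact (Finset.mem_sdiff.mp ha').2 (Finset.mem_inter.mp ha).1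
      have hCcard : ((K₀ ∩ U) ∪ (I \ K₀)).card = (K₀ ∩ U).card + (I \ K₀).card :=
        Finset.card_union_of_disjoint hdisj
      have hsplit : (K₀ ∩ U).card + (K₀ \ U).card = K₀.card := Finset.card_inter_add_card_sdiff K₀ U
      have hclC : G.IsClique (((K₀ ∩ U) ∪ (I \ K₀) : Finset (Fin N)) : Set (Fin N)) := by
        intro x hx y hy hxy
        rw [Finset.mem_coe, Finset.mem_union] at hx hy
        have adjI : ∀ a b : Fin N, a ∈ I → b ∈ U → a ≠ b → G.Adj a b := by
          intro a b haI hbU hab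
          obtain ⟨K, hK, hbK⟩ := Finset.mem_sup.mp hbU
          exact (hmem' K hK).2.isClique (hIK K hK haI) hbK hab
        rcases hx with hx | hx <;> rcases hy with hy | hy
        · exact hK₀cl.isClique (Finset.mem_inter.mp hx).1 (Finset.mem_inter.mp hy).1 hxy
        · exact ((adjI y x (Finset.mem_sdiff.mp hy).1 (Finset.mem_inter.mp hx).2 hxy.symm)).symm
        · exact adjI x y (Finset.mem_sdiff.mp hx).1 (Finset.mem_inter.mp hy).2 hxy
        · exact (hmem' K₁ hK₁).2.isClique (hIK K₁ hK₁ (Finset.mem_sdiff.mp hx).1)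
            (hIK K₁ hK₁ (Finset.mem_sdiff.mp hy).1) hxy
      have hCV : (K₀ ∩ U) ∪ (I \ K₀) ⊆ V := Finset.union_subset
        ((Finset.inter_subset_left).trans hK₀V) ((Finset.sdiff_subset).trans hIV)
      have hωc : ω + 1 ≤ ((K₀ ∩ U) ∪ (I \ K₀)).card := by
        have := hK₀cl.card_eq
        omega
      obtain ⟨T, hTC, hT⟩ := ER_clique_subset hclC hωc
      exact hfree T (hTC.trans hCV) hT
    -- conclude
    refine ⟨K₀ ∩ I, ?_, ?_⟩
    · intro K hK
      rcases Finset.mem_cons.mp hK with rfl | hK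
      · exact Finset.inter_subset_left
      · exact Finset.inter_subset_right.trans (hIK K hK)
    · have hsupc : (Finset.cons K₀ 𝒦 hK₀).sup id = K₀ ∪ U := by
        rw [Finset.sup_cons]; rfl
      rw [hsupc]
      have h1 : (K₀ \ U).card + U.card = (K₀ ∪ U).card := Finset.card_sdiff_add_card K₀ U
      have h2 : (I ∩ K₀).card + (I \ K₀).card = I.card := Finset.card_inter_add_card_sdiff I K₀
      have h3 : (K₀ ∩ I).card = (I ∩ K₀).card := by rw [Finset.inter_comm]
      omega

lemma ER_hajnal {N : ℕ} (G : SimpleGraph (Fin N)) (V : Finset (Fin N)) (ω : ℕ)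
    (hfree : ∀ T ⊆ V, ¬ G.IsNClique (ω + 1) T)
    (hV : V.card + 1 ≤ 2 * ω)
    {K₀ : Finset (Fin N)} (hK₀V : K₀ ⊆ V) (hK₀ : G.IsNClique ω K₀) :
    ∃ v ∈ V, ∀ K ⊆ V, G.IsNClique ω K → v ∈ K := by
  classical
  set 𝒦 := V.powerset.filter (fun K => G.IsNClique ω K) with h𝒦def
  have hmemiff : ∀ K, K ∈ 𝒦 ↔ K ⊆ V ∧ G.IsNClique ω K := by
    intro K
    simp [h𝒦def, Finset.mem_powerset]
  have h₀ : K₀ ∈ 𝒦 := (hmemiff K₀).mpr ⟨hK₀V, hK₀⟩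
  have h𝒦 : 𝒦.Nonempty := ⟨K₀, h₀⟩
  obtain ⟨J, hJ, hineq⟩ := ER_hajnal_family G V ω hfree 𝒦 h𝒦 (fun K hK => (hmemiff K).mp hK)
  have hsub : 𝒦.sup id ⊆ V := Finset.le_iff_subset.mp
    (Finset.sup_le fun K hK => Finset.le_iff_subset.mpr ((hmemiff K).mp hK).1)
  have hcard : (𝒦.sup id).card ≤ V.card := Finset.card_le_card hsub
  have hJpos : 1 ≤ J.card := by omega
  obtain ⟨v, hv⟩ := Finset.card_pos.mp hJpos
  exact ⟨v, hK₀V (hJ K₀ h₀ hv), fun K hKV hK => hJ K ((hmemiff K).mpr ⟨hKV, hK⟩) hv⟩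


/-- Pairing map: vertices `< 2m` are matched in pairs, the rest are alone. -/
def ERp (m : ℕ) {N : ℕ} (x : Fin N) : ℕ := if (x : ℕ) < 2 * m then (x : ℕ) / 2 else (x : ℕ)

/-- The complete graph minus a matching of size `m`. -/
def ERg (m N : ℕ) : SimpleGraph (Fin N) where
  Adj x y := ERp m x ≠ ERp m y
  symm := ⟨fun _ _ h => h.symm⟩
  loopless := ⟨fun _ h => h rfl⟩

lemma ERg_card_image {m N : ℕ} {T : Finset (Fin N)} (h : (ERg m N).IsClique ↑T) :
    (T.image (ERp m)).card = T.card := by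
  apply Finset.card_image_of_injOn
  intro x hx y hy hpxy
  by_contra hne
  exact (show ERp m x ≠ ERp m y from h hx hy hne) hpxy

lemma ERimg_card_le (m c : ℕ) {N : ℕ} (hc : 2 * m ≤ c) (T : Finset (Fin N))
    (hT : ∀ x ∈ T, (x : ℕ) < c) : (T.image (ERp m)).card ≤ c - m := by
  have hsub : T.image (ERp m) ⊆ Finset.range m ∪ Finset.Ico (2 * m) c := by
    intro v hv
    obtain ⟨x, hx, rfl⟩ := Finset.mem_image.mp hv
    rcases lt_or_ge (x : ℕ) (2 * m) with h | h
    · refine Finset.mem_union_left _ (Finset.mem_range.mpr ?_)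
      rw [ERp, if_pos h]
      omega
    · refine Finset.mem_union_right _ (Finset.mem_Ico.mpr ?_)
      rw [ERp, if_neg (by omega)]
      exact ⟨h, hT x hx⟩
  calc (T.image (ERp m)).card ≤ (Finset.range m ∪ Finset.Ico (2 * m) c).card :=
        Finset.card_le_card hsub
    _ ≤ (Finset.range m).card + (Finset.Ico (2 * m) c).card := Finset.card_union_le _ _
    _ = m + (c - 2 * m) := by rw [Finset.card_range, Nat.card_Ico]
    _ ≤ c - m := by omega

lemma ER_card_le_image (m : ℕ) {N : ℕ} (S : Finset (Fin N)) :
    S.card ≤ (S.image (ERp m)).card + m := by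
  classical
  have h1 : S.card = ∑ v ∈ S.image (ERp m), (S.filter (fun x => ERp m x = v)).card :=
    Finset.card_eq_sum_card_fiberwise (fun x hx => Finset.mem_image_of_mem _ hx)
  have h2 : ∀ v ∈ S.image (ERp m),
      (S.filter (fun x => ERp m x = v)).card ≤ if v < m then 2 else 1 := by
    intro v _
    have hsub : ∀ x ∈ S.filter (fun x => ERp m x = v),
        (x : ℕ) ∈ (if v < m then ({2 * v, 2 * v + 1} : Finset ℕ) else {v}) := by
      intro x hx
      obtain ⟨_, hpx⟩ := Finset.mem_filter.mp hx
      by_cases hxm : (x : ℕ) < 2 * m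
      · have hv' : (x : ℕ) / 2 = v := by rw [ERp, if_pos hxm] at hpx; exact hpx
        have hvm : v < m := by omega
        rw [if_pos hvm]
        simp only [Finset.mem_insert, Finset.mem_singleton]
        omega
      · have hv' : (x : ℕ) = v := by rw [ERp, if_neg hxm] at hpx; exact hpx
        have hvm : ¬ v < m := by omega
        rw [if_neg hvm, Finset.mem_singleton]
        exact hv'
    calc (S.filter (fun x => ERp m x = v)).card
        ≤ (if v < m then ({2 * v, 2 * v + 1} : Finset ℕ) else {v}).card :=
          Finset.card_le_card_of_injOn (fun x => (x : ℕ)) hsub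
            (Fin.val_injective.injOn)
      _ ≤ if v < m then 2 else 1 := by
          split
          · exact (Finset.card_insert_le _ _).trans (by simp)
          · simp
  have h3 : ∑ v ∈ S.image (ERp m), (S.filter (fun x => ERp m x = v)).card
      ≤ ∑ v ∈ S.image (ERp m), (if v < m then 2 else 1) := Finset.sum_le_sum h2
  have h4 : ∑ v ∈ S.image (ERp m), (if v < m then 2 else 1)
      = (S.image (ERp m)).card + ((S.image (ERp m)).filter (fun v => v < m)).card := by
    rw [Finset.card_filter, Finset.card_eq_sum_ones, ← Finset.sum_add_distrib]
    refine Finset.sum_congr rfl fun v _ => by split <;> rfl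
  have h5 : ((S.image (ERp m)).filter (fun v => v < m)).card ≤ m := by
    have : ((S.image (ERp m)).filter (fun v => v < m)) ⊆ Finset.range m := by
      intro v hv
      exact Finset.mem_range.mpr (Finset.mem_filter.mp hv).2
    simpa using Finset.card_le_card this
  omega

lemma ER_exists_section {α β : Type*} [DecidableEq α] [DecidableEq β] (f : α → β)
    (S : Finset α) : ∃ T ⊆ S, T.image f = S.image f ∧ T.card = (S.image f).card := by
  classical
  induction S using Finset.induction_on with
  | empty => exact ⟨∅, subset_rfl, rfl, rfl⟩
  | @insert a S' ha ih =>
    obtain ⟨T, hTS, hTim, hTcard⟩ := ih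
    by_cases hfa : f a ∈ S'.image f
    · refine ⟨T, hTS.trans (Finset.subset_insert _ _), ?_, ?_⟩
      · rw [Finset.image_insert, Finset.insert_eq_self.mpr hfa, hTim]
      · rw [Finset.image_insert, Finset.insert_eq_self.mpr hfa, hTcard]
    · have haT : a ∉ T := fun h => hfa (hTim ▸ Finset.mem_image_of_mem f h)
      refine ⟨insert a T, Finset.insert_subset_insert a hTS, ?_, ?_⟩
      · rw [Finset.image_insert, Finset.image_insert, hTim]
      · rw [Finset.image_insert, Finset.card_insert_of_notMem haT,
          Finset.card_insert_of_notMem hfa, hTcard]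

lemma ER_main {N : ℕ} (G : SimpleGraph (Fin N)) (s : ℕ) (hs : 1 ≤ s) (t : ℕ) :
    ∀ V : Finset (Fin N), V.card + 2 ≤ 2 * s + t →
    (∀ T ⊆ V, ¬ G.IsNClique (s + t) T) →
    ∃ S ⊆ V, V.card ≤ S.card + t ∧ ∀ T ⊆ S, ¬ G.IsNClique s T := by
  induction t with
  | zero =>
    intro V hcard hfree
    exact ⟨V, subset_rfl, by omega, by simpa using hfree⟩
  | succ t ih =>
    intro V hcard hfree
    rcases V.eq_empty_or_nonempty with rfl | ⟨v0, hv0⟩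
    · refine ⟨∅, subset_rfl, by simp, ?_⟩
      intro T hT hcl
      rw [Finset.subset_empty.mp hT] at hcl
      have := hcl.card_eq
      simp at this
      omega
    · have hfree' : ∀ T ⊆ V, ¬ G.IsNClique ((s + t) + 1) T := hfree
      have key : ∃ v ∈ V, ∀ T ⊆ V.erase v, ¬ G.IsNClique (s + t) T := by
        by_cases hex : ∃ K ⊆ V, G.IsNClique (s + t) K
        · obtain ⟨K, hKV, hK⟩ := hex
          obtain ⟨v, hvV, hvall⟩ := ER_hajnal G V (s + t) hfree' (by omega) hKV hK
          exact ⟨v, hvV, fun T hT hcl =>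
            Finset.notMem_erase v V (hT (hvall T (hT.trans (Finset.erase_subset _ _)) hcl))⟩
        · push_neg at hex
          exact ⟨v0, hv0, fun T hT hcl => hex T (hT.trans (Finset.erase_subset _ _)) hcl⟩
      obtain ⟨v, hvV, hfreeV'⟩ := key
      have hcV : (V.erase v).card = V.card - 1 := Finset.card_erase_of_mem hvV
      have hpos : 1 ≤ V.card := Finset.card_pos.mpr ⟨v, hvV⟩
      obtain ⟨S, hS, hScard, hSfree⟩ := ih (V.erase v) (by omega) hfreeV'
      exact ⟨S, hS.trans (Finset.erase_subset _ _), by omega, hSfree⟩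

lemma ER_construction (s t n : ℕ) (hs : 1 ≤ s) (h2 : s + t ≤ n + 1) (h3 : n + 2 ≤ 2 * s + t) :
    ∃ G : SimpleGraph (Fin n), G.CliqueFree (s + t) ∧ maxKsFreeSub n s G = n - t := by
  classical
  set m := n + 1 - (s + t) with hm
  refine ⟨ERg m n, ?_, ?_⟩
  · -- clique-free
    intro T hT
    have himg := ERg_card_image hT.isClique
    have hbound := ERimg_card_le m n (by omega) T (fun x _ => x.isLt)
    have hc := hT.card_eq
    omega
  · -- maxKsFreeSub = n - t
    have hub : ∀ k ∈ {k | ∃ S : Finset (Fin n), S.card = k ∧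
        ∀ T : Finset (Fin n), T ⊆ S → ¬ (ERg m n).IsNClique s T}, k ≤ n - t := by
      rintro k ⟨S, rfl, hSfree⟩
      by_contra hk
      push_neg at hk
      have h4 := ER_card_le_image m S
      obtain ⟨T, hTS, hTim, hTcard⟩ := ER_exists_section (ERp m) S
      have hinj : Set.InjOn (ERp m) (T : Set (Fin n)) :=
        Finset.injOn_of_card_image_eq (s := T) (f := ERp m) (by rw [hTim, hTcard])
      have hims : s ≤ T.card := by omega
      have hclT : (ERg m n).IsClique ↑T := fun x hx y hy hxy he => hxy (hinj hx hy he)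
      obtain ⟨T', hT', hT'cl⟩ := ER_clique_subset hclT hims
      exact hSfree T' (hT'.trans hTS) hT'cl
    have hmem : (n - t) ∈ {k | ∃ S : Finset (Fin n), S.card = k ∧
        ∀ T : Finset (Fin n), T ⊆ S → ¬ (ERg m n).IsNClique s T} := by
      refine ⟨(Finset.range (n - t)).attachFin
        (fun a ha => by have := Finset.mem_range.mp ha; omega), ?_, ?_⟩
      · rw [Finset.card_attachFin, Finset.card_range]
      · intro T hT hcl
        have himg := ERg_card_image hcl.isClique
        have hbound : (T.image (ERp m)).card ≤ (n - t) - m := by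
          refine ERimg_card_le m (n - t) (by omega) T (fun x hx => ?_)
          have := Finset.mem_attachFin _ |>.mp (hT hx)
          exact Finset.mem_range.mp this
        have hc := hcl.card_eq
        omega
    unfold maxKsFreeSub
    exact le_antisymm (csSup_le ⟨_, hmem⟩ hub) (le_csSup ⟨n - t, hub⟩ hmem)

theorem erdosRogers_eq (s t n : ℕ) (h1 : (n - t + 1) / 2 < s) (h2 : s + t ≤ n + 1) :
    erdosRogers s (s + t) n = n - t := by
  have hs : 1 ≤ s := by omega
  have h3 : n + 2 ≤ 2 * s + t := by omega
  obtain ⟨G₀, hG₀free, hG₀max⟩ := ER_construction s t n hs h2 h3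
  have hmem : (n - t) ∈ {k | ∃ G : SimpleGraph (Fin n), G.CliqueFree (s + t) ∧
      k = maxKsFreeSub n s G} := ⟨G₀, hG₀free, hG₀max.symm⟩
  have hlb : ∀ k ∈ {k | ∃ G : SimpleGraph (Fin n), G.CliqueFree (s + t) ∧
      k = maxKsFreeSub n s G}, n - t ≤ k := by
    rintro k ⟨G, hGfree, rfl⟩
    obtain ⟨S, hSV, hScard, hSfree⟩ := ER_main G s hs t Finset.univ
      (by rw [Finset.card_univ, Fintype.card_fin]; omega) (fun T _ hT => hGfree T hT)
    have hcardS : n - t ≤ S.card := by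
      have := Finset.card_univ (α := Fin n)
      rw [Fintype.card_fin] at this
      omega
    have hbdd : BddAbove {k | ∃ S : Finset (Fin n), S.card = k ∧
        ∀ T : Finset (Fin n), T ⊆ S → ¬ G.IsNClique s T} := by
      refine ⟨n, ?_⟩
      rintro k ⟨S', rfl, -⟩
      have := Finset.card_le_univ S'
      rwa [Fintype.card_fin] at this
    have : S.card ≤ maxKsFreeSub n s G := le_csSup hbdd ⟨S, rfl, hSfree⟩
    omega
  exact le_antisymm (Nat.sInf_le hmem) (le_csInf ⟨_, hmem⟩ hlb)
end

section
/- Let G be an n-vertex graph with α(G) = s−1+m for some 1 ≤ m ≤ t, where s > ⌊(n−t+1)/2⌋. Then there exist t vertices v₁,…,v_t such that α(G \ {v₁,…,v_t}) ≤ s−1. -/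
open SimpleGraph Set

namespace StabAux

variable {V : Type*} [Fintype V] [DecidableEq V] (G : SimpleGraph V)

/-- Independence predicate for finsets. -/
def IndepF (J : Finset V) : Prop := ∀ x ∈ J, ∀ y ∈ J, x ≠ y → ¬ G.Adj x y

lemma indepSet_bdd (A : Set V) :
    BddAbove {n | ∃ s : Finset V, ↑s ⊆ A ∧ s.card = n ∧
      ∀ x ∈ s, ∀ y ∈ s, x ≠ y → ¬ G.Adj x y} := by
  refine ⟨Fintype.card V, fun n hn => ?_⟩
  obtain ⟨s, -, rfl, -⟩ := hn
  exact Finset.card_le_univ s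

lemma exists_witness (A : Set V) :
    ∃ J : Finset V, ↑J ⊆ A ∧ J.card = indepNumOn G A ∧ IndepF G J := by
  have h0 : (0 : ℕ) ∈ {n | ∃ s : Finset V, ↑s ⊆ A ∧ s.card = n ∧
      ∀ x ∈ s, ∀ y ∈ s, x ≠ y → ¬ G.Adj x y} := by
    exact ⟨∅, by simp⟩
  have h := Nat.sSup_mem ⟨0, h0⟩ (indepSet_bdd G A)
  obtain ⟨J, h1, h2, h3⟩ := h
  exact ⟨J, h1, h2, h3⟩

lemma card_le_indepNumOn {A : Set V} {J : Finset V} (h1 : ↑J ⊆ A) (h2 : IndepF G J) :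
    J.card ≤ indepNumOn G A :=
  le_csSup (indepSet_bdd G A) ⟨J, h1, rfl, h2⟩

/-- Hajnal-type lemma: if every vertex of `W` is avoided by some maximum
independent subset of `W`, then `W` has at least `2a` vertices. -/
lemma hajnal (W : Finset V) (a : ℕ) (hW : W.Nonempty)
    (hmax : ∀ J ⊆ W, IndepF G J → J.card ≤ a)
    (hf : ∀ v ∈ W, ∃ J, J ⊆ W ∧ IndepF G J ∧ J.card = a ∧ v ∉ J) :
    2 * a ≤ W.card := by
  classical
  have hf' : ∀ v : V, ∃ J : Finset V,
      v ∈ W → (J ⊆ W ∧ IndepF G J ∧ J.card = a ∧ v ∉ J) := by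
    intro v
    by_cases h : v ∈ W
    · obtain ⟨J, hJ⟩ := hf v h; exact ⟨J, fun _ => hJ⟩
    · exact ⟨∅, fun h' => absurd h' h⟩
  choose f hfp using hf'
  have key : ∀ T : Finset V, T ⊆ W → T.Nonempty →
      2 * a ≤ (T.inf f).card + (T.sup f).card := by
    intro T
    induction T using Finset.cons_induction with
    | empty => intro _ h; exact absurd rfl h.ne_empty
    | cons u T hu ih =>
      intro hsub _
      have huW : u ∈ W := hsub (Finset.mem_cons_self u T)
      have hTW : T ⊆ W := fun x hx => hsub (Finset.mem_cons_of_mem hx)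
      have hup := hfp u huW
      rcases T.eq_empty_or_nonempty with rfl | hT
      · rw [Finset.inf_cons, Finset.sup_cons]
        simp only [Finset.inf_empty, Finset.sup_empty, inf_top_eq, sup_bot_eq]
        have := hup.2.2.1
        omega
      · have ih' := ih hTW hT
        obtain ⟨v0, hv0⟩ := hT
        set I := f u with hI
        set A := T.inf f with hA
        set U := T.sup f with hU
        have hIW : I ⊆ W := hup.1
        have hIind : IndepF G I := hup.2.1
        have hIcard : I.card = a := hup.2.2.1
        have hAle : ∀ v ∈ T, A ⊆ f v := fun v hv => Finset.le_iff_subset.1 (Finset.inf_le hv)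
        have hv0p := hfp v0 (hTW hv0)
        have hAW : A ⊆ W := (hAle v0 hv0).trans hv0p.1
        have hAind : IndepF G A := fun x hx y hy hxy =>
          hv0p.2.1 x (hAle v0 hv0 hx) y (hAle v0 hv0 hy) hxy
        set N := I.filter (fun x => ∃ b ∈ A, G.Adj x b) with hNdef
        have hKind : IndepF G ((I \ N) ∪ A) := by
          intro x hx y hy hxy hadj
          rcases Finset.mem_union.1 hx with hx' | hx' <;>
            rcases Finset.mem_union.1 hy with hy' | hy'
          · exact hIind x (Finset.mem_sdiff.1 hx').1 y (Finset.mem_sdiff.1 hy').1 hxy hadj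
          · exact (Finset.mem_sdiff.1 hx').2
              (Finset.mem_filter.2 ⟨(Finset.mem_sdiff.1 hx').1, y, hy', hadj⟩)
          · exact (Finset.mem_sdiff.1 hy').2
              (Finset.mem_filter.2 ⟨(Finset.mem_sdiff.1 hy').1, x, hx', hadj.symm⟩)
          · exact hAind x hx' y hy' hxy hadj
        have hKW : (I \ N) ∪ A ⊆ W :=
          Finset.union_subset ((Finset.sdiff_subset).trans hIW) hAW
        have hK : ((I \ N) ∪ A).card ≤ a := hmax _ hKW hKind
        have h1 : (I \ N).card + (A \ I).card ≤ ((I \ N) ∪ A).card := by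
          have hdis : Disjoint (I \ N) (A \ I) := by
            refine Finset.disjoint_left.2 fun x hx hx' => ?_
            exact (Finset.mem_sdiff.1 hx').2 (Finset.mem_sdiff.1 hx).1
          calc (I \ N).card + (A \ I).card = ((I \ N) ∪ (A \ I)).card :=
                (Finset.card_union_of_disjoint hdis).symm
            _ ≤ ((I \ N) ∪ A).card :=
                Finset.card_le_card (Finset.union_subset_union_right Finset.sdiff_subset)
        have h2 : I.card ≤ (I \ N).card + N.card := by
          have hsub2 : I ⊆ (I \ N) ∪ N := by
            intro x hx
            by_cases h : x ∈ N
            · exact Finset.mem_union_right _ h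
            · exact Finset.mem_union_left _ (Finset.mem_sdiff.2 ⟨hx, h⟩)
          calc I.card ≤ ((I \ N) ∪ N).card := Finset.card_le_card hsub2
            _ ≤ (I \ N).card + N.card := Finset.card_union_le _ _
        have hANle : (A \ I).card ≤ N.card := by omega
        have hNsub : N ⊆ I \ U := by
          intro x hx
          obtain ⟨hxI, b, hbA, hadj⟩ := Finset.mem_filter.1 hx
          refine Finset.mem_sdiff.2 ⟨hxI, fun hxU => ?_⟩
          obtain ⟨w, hwT, hxw⟩ := Finset.mem_sup.1 hxU
          exact (hfp w (hTW hwT)).2.1 x hxw b (hAle w hwT hbA) (G.ne_of_adj hadj) hadj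
        have h3 : (A \ I).card ≤ (I \ U).card :=
          hANle.trans (Finset.card_le_card hNsub)
        have e1 : (A ∩ I).card + (A \ I).card = A.card :=
          Finset.card_inter_add_card_sdiff A I
        have e2 : (I \ U).card + U.card = (I ∪ U).card :=
          Finset.card_sdiff_add_card I U
        rw [Finset.inf_cons, Finset.sup_cons]
        have hic : (f u ⊓ A : Finset V) = A ∩ I := by
          rw [Finset.inf_eq_inter, Finset.inter_comm]
        have hsc : (f u ⊔ U : Finset V) = I ∪ U := by
          rw [Finset.sup_eq_union]
        rw [hic, hsc]
        omega
  have hkey := key W (Finset.Subset.refl W) hW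
  have hinf : W.inf f = ∅ := by
    rw [Finset.eq_empty_iff_forall_notMem]
    intro x hx
    obtain ⟨v0, hv0⟩ := hW
    have hxW : x ∈ W := (hfp v0 hv0).1 (Finset.le_iff_subset.1 (Finset.inf_le hv0) hx)
    exact (hfp x hxW).2.2.2 (Finset.le_iff_subset.1 (Finset.inf_le hxW) hx)
  have hsup : W.sup f ⊆ W := by
    intro x hx
    obtain ⟨v, hv, hxv⟩ := Finset.mem_sup.1 hx
    exact (hfp v hv).1 hxv
  have := Finset.card_le_card hsup
  rw [hinf] at hkey
  simpa using hkey.trans (by simpa using Nat.add_le_add_left this 0)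

/-- Core counting lemma. -/
lemma core (k : ℕ) : ∀ (W : Finset V) (s : ℕ), 1 ≤ s → k + 1 ≤ W.card →
    (∀ J ⊆ W, IndepF G J → J.card ≤ s + k) →
    (∀ S ⊆ W, S.card = k + 1 →
      ∃ J, J ⊆ W ∧ Disjoint J S ∧ IndepF G J ∧ s ≤ J.card) →
    2 * s + k ≤ W.card := by
  induction k with
  | zero =>
    intro W s hs hcard hmax hH2
    obtain ⟨M, hMW, hMcard, hMind⟩ := exists_witness G (↑W : Set V)
    have hMW' : M ⊆ W := Finset.coe_subset.1 hMW
    have hmaxa : ∀ J ⊆ W, IndepF G J → J.card ≤ M.card := by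
      intro J hJ hJind
      rw [hMcard]
      exact card_le_indepNumOn G (Finset.coe_subset.2 hJ) hJind
    have hale : M.card ≤ s + 0 := hmax M hMW' hMind
    have hage : s ≤ M.card := by
      obtain ⟨S, hSW, hScard⟩ := Finset.exists_subset_card_eq (s := W) (n := 1) hcard
      obtain ⟨J, hJW, _, hJind, hJcard⟩ := hH2 S hSW hScard
      exact hJcard.trans (hmaxa J hJW hJind)
    have haeq : M.card = s := by omega
    by_cases hA : ∀ v ∈ W, ∃ J, J ⊆ W ∧ IndepF G J ∧ J.card = M.card ∧ v ∉ J
    · have := hajnal G W M.card (Finset.card_pos.1 (by omega)) hmaxa hA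
      omega
    · push_neg at hA
      obtain ⟨v, hvW, hv⟩ := hA
      obtain ⟨J, hJW, hJdis, hJind, hJcard⟩ := hH2 {v}
        (Finset.singleton_subset_iff.2 hvW) (Finset.card_singleton v)
      have hJa : J.card = M.card := le_antisymm (hmaxa J hJW hJind) (haeq ▸ hJcard)
      have hvJ : v ∉ J := Finset.disjoint_right.1 hJdis (Finset.mem_singleton_self v)
      exact absurd (hv J hJW hJind hJa) hvJ
  | succ k' ih =>
    intro W s hs hcard hmax hH2
    obtain ⟨M, hMW, hMcard, hMind⟩ := exists_witness G (↑W : Set V)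
    have hMW' : M ⊆ W := Finset.coe_subset.1 hMW
    have hmaxa : ∀ J ⊆ W, IndepF G J → J.card ≤ M.card := by
      intro J hJ hJind
      rw [hMcard]
      exact card_le_indepNumOn G (Finset.coe_subset.2 hJ) hJind
    have hale : M.card ≤ s + (k' + 1) := hmax M hMW' hMind
    have hage : s ≤ M.card := by
      obtain ⟨S, hSW, hScard⟩ := Finset.exists_subset_card_eq (s := W) (n := k' + 2) hcard
      obtain ⟨J, hJW, _, hJind, hJcard⟩ := hH2 S hSW hScard
      exact hJcard.trans (hmaxa J hJW hJind)
    by_cases hA : M.card = s + (k' + 1) ∧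
        ∀ v ∈ W, ∃ J, J ⊆ W ∧ IndepF G J ∧ J.card = M.card ∧ v ∉ J
    · have := hajnal G W M.card (Finset.card_pos.1 (by omega)) hmaxa hA.2
      omega
    · -- find v whose erasure keeps the independence bound at s + k'
      have hv : ∃ v ∈ W, ∀ J ⊆ W.erase v, IndepF G J → J.card ≤ s + k' := by
        by_cases ha : M.card = s + (k' + 1)
        · have hA' := hA
          push_neg at hA'
          obtain ⟨v, hvW, hv⟩ := hA' ha
          refine ⟨v, hvW, fun J hJ hJind => ?_⟩
          have hJW : J ⊆ W := hJ.trans (Finset.erase_subset v W)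
          have h1 : J.card ≤ M.card := hmaxa J hJW hJind
          have h2 : J.card ≠ M.card := by
            intro hJa
            have := hv J hJW hJind hJa
            exact (Finset.notMem_erase v W) (hJ this)
          omega
        · obtain ⟨v, hvW⟩ := Finset.card_pos.1 (show 0 < W.card by omega)
          refine ⟨v, hvW, fun J hJ hJind => ?_⟩
          have hJW : J ⊆ W := hJ.trans (Finset.erase_subset v W)
          have := hmaxa J hJW hJind
          omega
      obtain ⟨v, hvW, hvbound⟩ := hv
      have hecard : (W.erase v).card = W.card - 1 := Finset.card_erase_of_mem hvW
      have hstep := ih (W.erase v) s hs (by omega) hvbound ?_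
      · omega
      · intro S hS hScard
        have hvS : v ∉ S := fun h => Finset.notMem_erase v W (hS h)
        have hins : (insert v S).card = k' + 2 := by
          rw [Finset.card_insert_of_notMem hvS, hScard]
        have hinsW : insert v S ⊆ W :=
          Finset.insert_subset hvW (hS.trans (Finset.erase_subset v W))
        obtain ⟨J, hJW, hJdis, hJind, hJcard⟩ := hH2 (insert v S) hinsW hins
        refine ⟨J, ?_, ?_, hJind, hJcard⟩
        · intro x hx
          refine Finset.mem_erase.2 ⟨?_, hJW hx⟩
          intro hxv
          exact Finset.disjoint_left.1 hJdis hx (hxv ▸ Finset.mem_insert_self v S)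
        · exact Finset.disjoint_of_subset_right (Finset.subset_insert v S) hJdis

end StabAux

open StabAux in
theorem exists_drop_to_s_sub_one {V : Type*} [Fintype V] (G : SimpleGraph V)
    (n s t m : ℕ) (hn : Fintype.card V = n) (hs : 1 ≤ s) (hm : 1 ≤ m) (hmt : m ≤ t)
    (htn : t ≤ n) (hslb : (n - t + 1) / 2 < s) (halpha : _root_.indepNum G = s - 1 + m) :
    ∃ S : Finset V, S.card = t ∧ indepNumOn G (↑S : Set V)ᶜ ≤ s - 1 := by
  classical
  by_contra hcon
  push_neg at hcon
  obtain ⟨k, rfl⟩ : ∃ k, t = k + 1 := ⟨t - 1, by omega⟩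
  have hcore := core G k (Finset.univ : Finset V) s hs ?hc ?h1 ?h2
  case hc => simpa [hn] using htn
  case h1 =>
    intro J _ hJind
    have : J.card ≤ _root_.indepNum G :=
      card_le_indepNumOn G (Set.subset_univ _) hJind
    omega
  case h2 =>
    intro S _ hScard
    have hgt := hcon S hScard
    obtain ⟨J, hJ1, hJ2, hJ3⟩ := exists_witness G ((↑S : Set V)ᶜ)
    refine ⟨J, Finset.subset_univ J, ?_, hJ3, by omega⟩
    refine Finset.disjoint_left.2 fun x hx hxS => ?_
    exact (hJ1 (Finset.mem_coe.2 hx)) (Finset.mem_coe.2 hxS)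
  have hlt : n - (k + 1) + 1 < 2 * s := by
    have := (Nat.div_lt_iff_lt_mul (by norm_num : 0 < 2)).1 hslb
    omega
  have : 2 * s + k ≤ n := by simpa [hn] using hcore
  omega
end

section
/- Let G be a tight (1,0)-stable graph on n = 2k vertices (so α(G) = k and α(G \ {v}) = k for all v). Then k ≤ |E(G)| ≤ k², and both bounds are attained (by a perfect matching and by K_{k,k} respectively). -/
set_option maxHeartbeats 1600000
set_option linter.unusedSectionVars false

open SimpleGraph Set

section API
variable {V : Type*} [Fintype V] (G : SimpleGraph V)
lemma bddAboveIndep (A : Set V) : BddAbove {n | ∃ s : Finset V, ↑s ⊆ A ∧ s.card = n ∧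
    ∀ x ∈ s, ∀ y ∈ s, x ≠ y → ¬ G.Adj x y} := by
  refine ⟨Fintype.card V, ?_⟩
  rintro n ⟨s, -, rfl, -⟩
  exact Finset.card_le_univ s
lemma le_indepNumOn {A : Set V} {s : Finset V} (h1 : ↑s ⊆ A)
    (h2 : ∀ x ∈ s, ∀ y ∈ s, x ≠ y → ¬ G.Adj x y) : s.card ≤ indepNumOn G A :=
  le_csSup (bddAboveIndep G A) ⟨s, h1, rfl, h2⟩
lemma indepNumOn_spec (A : Set V) : ∃ s : Finset V, ↑s ⊆ A ∧ s.card = indepNumOn G A ∧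
    ∀ x ∈ s, ∀ y ∈ s, x ≠ y → ¬ G.Adj x y := by
  have h0 : (0:ℕ) ∈ {n | ∃ s : Finset V, ↑s ⊆ A ∧ s.card = n ∧
      ∀ x ∈ s, ∀ y ∈ s, x ≠ y → ¬ G.Adj x y} :=
    ⟨∅, by simp, by simp, by simp⟩
  exact Nat.sSup_mem ⟨0, h0⟩ (bddAboveIndep G A)
lemma le_indepNum {s : Finset V} (h2 : ∀ x ∈ s, ∀ y ∈ s, x ≠ y → ¬ G.Adj x y) :
    s.card ≤ _root_.indepNum G := le_indepNumOn G (by simp) h2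
lemma indepNum_spec : ∃ s : Finset V, s.card = _root_.indepNum G ∧
    ∀ x ∈ s, ∀ y ∈ s, x ≠ y → ¬ G.Adj x y := by
  obtain ⟨s, -, h⟩ := indepNumOn_spec G Set.univ
  exact ⟨s, h⟩

lemma indepNumOn_le_indepNum (A : Set V) : indepNumOn G A ≤ _root_.indepNum G := by
  obtain ⟨s, h1, h2, h3⟩ := indepNumOn_spec G A
  exact h2 ▸ le_indepNum G h3
end API

section Core
variable {V : Type*} [Fintype V] [DecidableEq V] {G : SimpleGraph V} [DecidableRel G.Adj]
  {k : ℕ}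

/-- every independent `k`-set avoids a vertex of degree `> k`. -/
lemma stepA (hcard : Fintype.card V = 2 * k) {v : V} (hdeg : k + 1 ≤ G.degree v)
    {s : Finset V} (hs : ∀ x ∈ s, ∀ y ∈ s, x ≠ y → ¬ G.Adj x y) (hsk : s.card = k) :
    v ∉ s := by
  intro hv
  have hsub : s ⊆ Finset.univ \ G.neighborFinset v := by
    intro x hx
    simp only [Finset.mem_sdiff, Finset.mem_univ, true_and, mem_neighborFinset]
    intro hadj
    exact hs x hx v hv (G.ne_of_adj hadj).symm hadj.symm
  have h1 := Finset.card_le_card hsub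
  rw [Finset.card_sdiff_of_subset (Finset.subset_univ _), Finset.card_univ, hcard] at h1
  rw [← SimpleGraph.card_neighborFinset_eq_degree] at hdeg
  have hpos : 0 < Fintype.card V := Fintype.card_pos_iff.mpr ⟨v⟩
  omega

/-- Hall-type expansion lemma (key step of Hajnal's theorem). -/
lemma hall_expand (hcard : Fintype.card V = 2 * k) (halpha : _root_.indepNum G = k)
    {v : V} (hdeg : k + 1 ≤ G.degree v)
    (hmiss : ∀ y : V, ∃ s : Finset V, (∀ x ∈ s, ∀ y ∈ s, x ≠ y → ¬ G.Adj x y) ∧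
      s.card = k ∧ y ∉ s)
    {I : Finset V} (hI : ∀ x ∈ I, ∀ y ∈ I, x ≠ y → ¬ G.Adj x y) :
    ∀ Y : Finset V, Y ⊆ I → Y.card ≤ ((Y.biUnion
      (fun x => (G.neighborFinset x \ I).erase v))).card := by
  set t : V → Finset V := fun x => (G.neighborFinset x \ I).erase v with ht
  intro Y
  induction Y using Finset.strongInduction with
  | _ Y IH =>
  intro hYI
  by_contra hlt
  push_neg at hlt
  have hYne : Y.Nonempty := by
    rcases Y.eq_empty_or_nonempty with rfl | h
    · simp at hlt
    · exact h
  obtain ⟨y, hy⟩ := hYne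
  -- Hall's theorem on the erase
  have hhall : ∀ s : Finset {x // x ∈ Y.erase y},
      s.card ≤ (s.biUnion (fun x => t x.val)).card := by
    intro s
    have hinj : Function.Injective (Subtype.val : {x // x ∈ Y.erase y} → V) :=
      Subtype.val_injective
    have hcardim : (s.image Subtype.val).card = s.card :=
      Finset.card_image_of_injective _ hinj
    have hsubY : s.image Subtype.val ⊆ Y.erase y := by
      intro x hx; simp only [Finset.mem_image] at hx
      obtain ⟨⟨x', hx'⟩, -, rfl⟩ := hx; exact hx'
    have hss : s.image Subtype.val ⊂ Y :=
      lt_of_le_of_lt hsubY (Finset.erase_ssubset hy)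
    have := IH _ hss (hss.subset.trans hYI)
    rwa [Finset.image_biUnion, hcardim] at this
  obtain ⟨f, hfinj, hft⟩ :=
    (Finset.all_card_le_biUnion_card_iff_existsInjective' (fun x : {x // x ∈ Y.erase y} => t x.val)).mp hhall
  obtain ⟨S, hSind, hSk, hyS⟩ := hmiss y
  have hvS : v ∉ S := stepA hcard hdeg hSind hSk
  set NB : Finset V := Y.biUnion (fun x => G.neighborFinset x) with hNB
  -- T' independent
  set T' : Finset V := Y ∪ (S \ NB) with hT'
  have hT'ind : ∀ x ∈ T', ∀ z ∈ T', x ≠ z → ¬ G.Adj x z := by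
    intro x hx z hz hne hadj
    rw [hT', Finset.mem_union] at hx hz
    rcases hx with hx | hx <;> rcases hz with hz | hz
    · exact hI x (hYI hx) z (hYI hz) hne hadj
    · rw [Finset.mem_sdiff] at hz
      exact hz.2 (Finset.mem_biUnion.mpr ⟨x, hx, (G.mem_neighborFinset x z).mpr hadj⟩)
    · rw [Finset.mem_sdiff] at hx
      exact hx.2 (Finset.mem_biUnion.mpr ⟨z, hz, (G.mem_neighborFinset z x).mpr hadj.symm⟩)
    · exact hSind x (Finset.mem_sdiff.mp hx).1 z (Finset.mem_sdiff.mp hz).1 hne hadj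
  have hT'le : T'.card ≤ k := halpha ▸ le_indepNum G hT'ind
  -- Y ∩ NB = ∅
  have hYNB : Y ∩ NB = ∅ := by
    rw [Finset.eq_empty_iff_forall_notMem]
    intro x hx
    rw [Finset.mem_inter, hNB, Finset.mem_biUnion] at hx
    obtain ⟨hxY, y', hy', hadj⟩ := hx
    rw [G.mem_neighborFinset] at hadj
    exact hI y' (hYI hy') x (hYI hxY) (G.ne_of_adj hadj) hadj
  have hYint : Y ∩ (S \ NB) = Y ∩ S := by
    ext x
    simp only [Finset.mem_inter, Finset.mem_sdiff]
    constructor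
    · rintro ⟨h1, h2, h3⟩; exact ⟨h1, h2⟩
    · rintro ⟨h1, h2⟩
      refine ⟨h1, h2, fun hx => ?_⟩
      have : x ∈ Y ∩ NB := Finset.mem_inter.mpr ⟨h1, hx⟩
      rw [hYNB] at this; exact absurd this (Finset.notMem_empty x)
  -- S ∩ NB ⊆ extN Y ∩ S
  have hSNB : S ∩ NB ⊆ (Y.biUnion t) ∩ S := by
    intro z hz
    rw [Finset.mem_inter, hNB, Finset.mem_biUnion] at hz
    obtain ⟨hzS, x, hxY, hadj⟩ := hz
    rw [G.mem_neighborFinset] at hadj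
    rw [Finset.mem_inter, Finset.mem_biUnion]
    refine ⟨⟨x, hxY, ?_⟩, hzS⟩
    rw [ht]
    simp only [Finset.mem_erase, Finset.mem_sdiff, mem_neighborFinset]
    refine ⟨fun h => hvS (h ▸ hzS), hadj, fun hzI => ?_⟩
    exact hI x (hYI hxY) z hzI (G.ne_of_adj hadj) hadj
  -- injection from Y ∩ S into (extN Y) \ S
  have hYS : (Y ∩ S).card ≤ ((Y.biUnion t) \ S).card := by
    have hmemYe : ∀ x ∈ Y ∩ S, x ∈ Y.erase y := by
      intro x hx
      rw [Finset.mem_inter] at hx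
      exact Finset.mem_erase.mpr ⟨fun h => hyS (h ▸ hx.2), hx.1⟩
    rw [← Finset.card_attach (s := Y ∩ S)]
    refine Finset.card_le_card_of_injOn
      (fun a : {x // x ∈ Y ∩ S} => f ⟨a.1, hmemYe a.1 a.2⟩) ?_ ?_
    · rintro ⟨x, hx⟩ -
      have hfx := hft ⟨x, hmemYe x hx⟩
      rw [ht] at hfx
      simp only [Finset.mem_erase, Finset.mem_sdiff, G.mem_neighborFinset] at hfx
      rw [Finset.mem_coe, Finset.mem_sdiff, Finset.mem_biUnion]
      refine ⟨⟨x, (Finset.mem_inter.mp hx).1, hft ⟨x, hmemYe x hx⟩⟩, fun hfS => ?_⟩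
      exact hSind x (Finset.mem_inter.mp hx).2 _ hfS (G.ne_of_adj hfx.2.1) hfx.2.1
    · rintro ⟨x, hx⟩ - ⟨x', hx'⟩ - heq
      exact Subtype.ext (show x = x' from congrArg Subtype.val (hfinj heq))
  -- counting
  have c1 : (T'.card) + (Y ∩ (S \ NB)).card = Y.card + (S \ NB).card :=
    Finset.card_union_add_card_inter Y (S \ NB)
  have c2 := Finset.card_sdiff_add_card_inter S NB
  have c3 := Finset.card_sdiff_add_card_inter (Y.biUnion t) S
  have c4 : (S ∩ NB).card ≤ ((Y.biUnion t) ∩ S).card := Finset.card_le_card hSNB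
  have c5 : (Y ∩ (S \ NB)).card = (Y ∩ S).card := by rw [hYint]
  omega

lemma hmiss_of_stable (hstable : ∀ v : V, indepNumOn G ({v} : Set V)ᶜ = k) :
    ∀ y : V, ∃ s : Finset V, (∀ x ∈ s, ∀ y ∈ s, x ≠ y → ¬ G.Adj x y) ∧
      s.card = k ∧ y ∉ s := by
  intro y
  obtain ⟨s, h1, h2, h3⟩ := indepNumOn_spec G ({y} : Set V)ᶜ
  refine ⟨s, h3, by rw [h2, hstable], fun hy => ?_⟩
  have := h1 hy
  simp at this

lemma degree_le (hcard : Fintype.card V = 2 * k) (halpha : _root_.indepNum G = k)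
    (hstable : ∀ v : V, indepNumOn G ({v} : Set V)ᶜ = k) (v : V) : G.degree v ≤ k := by
  by_contra hdeg
  push_neg at hdeg
  obtain ⟨I, hIk, hIind⟩ := indepNum_spec G
  rw [halpha] at hIk
  have hvI : v ∉ I := stepA hcard hdeg hIind hIk
  have hkey := hall_expand hcard halpha hdeg (hmiss_of_stable hstable) hIind I (subset_refl I)
  have hsub : (I.biUnion (fun x => (G.neighborFinset x \ I).erase v)) ⊆
      (Finset.univ \ I).erase v := by
    intro z hz
    rw [Finset.mem_biUnion] at hz
    obtain ⟨x, -, hz⟩ := hz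
    rw [Finset.mem_erase, Finset.mem_sdiff] at hz ⊢
    exact ⟨hz.1, Finset.mem_univ z, hz.2.2⟩
  have h2 := Finset.card_le_card hsub
  have h3 : v ∈ Finset.univ \ I := Finset.mem_sdiff.mpr ⟨Finset.mem_univ v, hvI⟩
  rw [Finset.card_erase_of_mem h3, Finset.card_sdiff_of_subset (Finset.subset_univ I),
    Finset.card_univ, hcard, hIk] at h2
  have hpos : 0 < Fintype.card V := Fintype.card_pos_iff.mpr ⟨v⟩
  omega

lemma edge_bounds (hcard : Fintype.card V = 2 * k) (halpha : _root_.indepNum G = k)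
    (hstable : ∀ v : V, indepNumOn G ({v} : Set V)ᶜ = k) :
    k ≤ G.edgeSet.ncard ∧ G.edgeSet.ncard ≤ k ^ 2 := by
  have hdegpos : ∀ v : V, 1 ≤ G.degree v := by
    intro v
    rw [Nat.one_le_iff_ne_zero, ← Nat.pos_iff_ne_zero, G.degree_pos_iff_exists_adj]
    by_contra hno
    push_neg at hno
    obtain ⟨s, hind, hsk, hvs⟩ := hmiss_of_stable hstable v
    have hind2 : ∀ x ∈ insert v s, ∀ y ∈ insert v s, x ≠ y → ¬ G.Adj x y := by
      intro x hx y hy hne hadj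
      rcases Finset.mem_insert.mp hx with rfl | hx
      · exact (hno y) hadj
      · rcases Finset.mem_insert.mp hy with rfl | hy
        · exact (hno x) hadj.symm
        · exact hind x hx y hy hne hadj
    have := le_indepNum G hind2
    rw [Finset.card_insert_of_notMem hvs, hsk, halpha] at this
    omega
  have hncard : G.edgeSet.ncard = G.edgeFinset.card := by
    rw [← SimpleGraph.coe_edgeFinset, Set.ncard_coe_finset]
  have hhs := G.sum_degrees_eq_twice_card_edges
  constructor
  · -- lower bound
    have : Fintype.card V ≤ ∑ v : V, G.degree v :=
      Finset.card_nsmul_le_sum Finset.univ _ 1 (fun v _ => hdegpos v) |>.trans_eq' (by simp)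
    rw [hcard, hhs] at this
    omega
  · -- upper bound
    obtain ⟨I, hIk, hIind⟩ := indepNum_spec G
    rw [halpha] at hIk
    have hsub : G.edgeFinset ⊆ (Finset.univ \ I).biUnion (fun x => G.incidenceFinset x) := by
      intro e he
      induction e with
      | h a b =>
        rw [SimpleGraph.mem_edgeFinset, SimpleGraph.mem_edgeSet] at he
        have hne := G.ne_of_adj he
        have : a ∉ I ∨ b ∉ I := by
          by_contra hc
          push_neg at hc
          exact hIind a hc.1 b hc.2 hne he
        rw [Finset.mem_biUnion]
        rcases this with h | h
        · exact ⟨a, Finset.mem_sdiff.mpr ⟨Finset.mem_univ a, h⟩,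
            (G.mem_incidenceFinset _ _).mpr ⟨he, Sym2.mem_mk_left a b⟩⟩
        · exact ⟨b, Finset.mem_sdiff.mpr ⟨Finset.mem_univ b, h⟩,
            (G.mem_incidenceFinset _ _).mpr ⟨he, Sym2.mem_mk_right a b⟩⟩
    have h1 := (Finset.card_le_card hsub).trans (Finset.card_biUnion_le)
    have h2 : ∀ x ∈ Finset.univ \ I, (G.incidenceFinset x).card ≤ k := by
      intro x _
      rw [G.card_incidenceFinset_eq_degree]
      exact degree_le hcard halpha hstable x
    have h3 := Finset.sum_le_card_nsmul _ _ k h2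
    rw [Finset.card_sdiff_of_subset (Finset.subset_univ I), Finset.card_univ, hcard, hIk] at h3
    rw [hncard]
    simp only [smul_eq_mul] at h3
    calc G.edgeFinset.card ≤ _ := h1
    _ ≤ (2*k - k) * k := h3
    _ ≤ k ^ 2 := by have h : 2*k-k = k := by omega
                    rw [h, pow_two]
end Core

section Constr
variable {k : ℕ}

/-- perfect matching on `Fin (2*k)`, pairing `2m` with `2m+1`. -/
def matchG (k : ℕ) : SimpleGraph (Fin (2*k)) where
  Adj i j := i.val / 2 = j.val / 2 ∧ i ≠ j
  symm := ⟨by rintro i j ⟨h1, h2⟩; exact ⟨h1.symm, h2.symm⟩⟩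
  loopless := ⟨by rintro i ⟨-, h2⟩; exact h2 rfl⟩

instance : DecidableRel (matchG k).Adj := fun _ _ => instDecidableAnd

lemma matchG_indep_card {s : Finset (Fin (2*k))}
    (hs : ∀ x ∈ s, ∀ y ∈ s, x ≠ y → ¬ (matchG k).Adj x y) : s.card ≤ k := by
  classical
  have hinj : Set.InjOn (fun i : Fin (2*k) => i.val / 2) s := by
    intro x hx y hy hxy
    by_contra hne
    exact hs x hx y hy hne ⟨hxy, hne⟩
  calc s.card = (s.image (fun i : Fin (2*k) => i.val / 2)).card :=
        (Finset.card_image_of_injOn hinj).symm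
    _ ≤ (Finset.range k).card := by
        apply Finset.card_le_card
        intro n hn
        rw [Finset.mem_image] at hn
        obtain ⟨i, -, rfl⟩ := hn
        rw [Finset.mem_range]
        have := i.isLt
        omega
    _ = k := Finset.card_range k

/-- pick one vertex from each matched pair, avoiding `v`. -/
def mswapf (v : Fin (2*k)) (m : Fin k) : Fin (2*k) :=
  if m.val = v.val / 2 then (⟨2*(v.val/2) + (1 - v.val % 2), by omega⟩ : Fin (2*k))
  else ⟨2*m.val, by omega⟩

def mswap (v : Fin (2*k)) : Finset (Fin (2*k)) := Finset.univ.image (mswapf v)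

lemma mswap_half (v : Fin (2*k)) (m : Fin k) : (mswapf v m).val / 2 = m.val := by
  rw [mswapf]
  split <;> rename_i h
  · show (2*(v.val/2) + (1 - v.val % 2)) / 2 = m.val
    omega
  · show (2*m.val) / 2 = m.val
    omega

lemma mswap_card (v : Fin (2*k)) : (mswap v).card = k := by
  rw [mswap, Finset.card_image_of_injective _ (fun a b h => by
    have h2 : (mswapf v a).val / 2 = (mswapf v b).val / 2 := by rw [h]
    rw [mswap_half v a, mswap_half v b] at h2
    exact Fin.ext h2), Finset.card_univ, Fintype.card_fin]

lemma mswap_indep (v : Fin (2*k)) :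
    ∀ x ∈ mswap v, ∀ y ∈ mswap v, x ≠ y → ¬ (matchG k).Adj x y := by
  intro x hx y hy hne hadj
  rw [mswap, Finset.mem_image] at hx hy
  obtain ⟨a, -, rfl⟩ := hx
  obtain ⟨b, -, rfl⟩ := hy
  obtain ⟨h1, -⟩ := hadj
  rw [mswap_half v a, mswap_half v b] at h1
  exact hne (congrArg (mswapf v) (Fin.ext h1))

lemma mswap_avoid (v : Fin (2*k)) : v ∉ mswap v := by
  rw [mswap, Finset.mem_image]
  rintro ⟨m, -, hm⟩
  rw [mswapf] at hm
  by_cases h : m.val = v.val / 2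
  · rw [if_pos h] at hm
    have hh : 2*(v.val/2) + (1 - v.val % 2) = v.val := congrArg Fin.val hm
    omega
  · rw [if_neg h] at hm
    have hh : 2*m.val = v.val := congrArg Fin.val hm
    have := congrArg (fun n => n / 2) hh
    omega

lemma matchG_indepNum : _root_.indepNum (matchG k) = k := by
  apply le_antisymm
  · obtain ⟨s, h1, h2⟩ := indepNum_spec (matchG k)
    exact h1 ▸ matchG_indep_card h2
  · rcases Nat.eq_zero_or_pos k with rfl | hk
    · exact Nat.zero_le _
    · calc k = (mswap (⟨0, by omega⟩ : Fin (2*k))).card := (mswap_card _).symm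
      _ ≤ _root_.indepNum (matchG k) := le_indepNum _ (mswap_indep _)

lemma matchG_stable (v : Fin (2*k)) : indepNumOn (matchG k) ({v} : Set (Fin (2*k)))ᶜ = k := by
  apply le_antisymm
  · exact le_trans (indepNumOn_le_indepNum _ _) (le_of_eq matchG_indepNum)
  · calc k = (mswap v).card := (mswap_card v).symm
    _ ≤ indepNumOn (matchG k) ({v} : Set (Fin (2*k)))ᶜ := by
        refine le_indepNumOn _ ?_ (mswap_indep v)
        intro x hx
        simp only [Set.mem_compl_iff, Set.mem_singleton_iff]
        rintro rfl
        exact mswap_avoid _ (by exact_mod_cast hx)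

lemma matchG_degree (v : Fin (2*k)) : (matchG k).degree v = 1 := by
  have hcard : v.val < 2*k := v.isLt
  have : (matchG k).neighborFinset v =
      {(⟨2*(v.val/2) + (1 - v.val % 2), by omega⟩ : Fin (2*k))} := by
    ext j
    rw [SimpleGraph.mem_neighborFinset, Finset.mem_singleton]
    constructor
    · rintro ⟨h1, h2⟩
      have hne : v.val ≠ j.val := fun h => h2 (Fin.ext h)
      apply Fin.ext
      show j.val = 2*(v.val/2) + (1 - v.val % 2)
      omega
    · rintro rfl
      refine ⟨?_, fun h => ?_⟩
      · show v.val / 2 = (2*(v.val/2) + (1 - v.val % 2)) / 2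
        omega
      · have h2 : v.val = 2*(v.val/2) + (1 - v.val % 2) := congrArg Fin.val h
        omega
  rw [SimpleGraph.degree, this, Finset.card_singleton]

lemma matchG_edges : (matchG k).edgeSet.ncard = k := by
  classical
  have hncard : (matchG k).edgeSet.ncard = (matchG k).edgeFinset.card := by
    rw [← SimpleGraph.coe_edgeFinset, Set.ncard_coe_finset]
  have hhs := (matchG k).sum_degrees_eq_twice_card_edges
  have hsum : ∑ v : Fin (2*k), (matchG k).degree v = 2*k := by
    rw [Finset.sum_congr rfl (fun v _ => matchG_degree v)]
    simp [Finset.card_univ]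
  omega


/-- complete bipartite graph on `Fin (2*k)`. -/
def biG (k : ℕ) : SimpleGraph (Fin (2*k)) where
  Adj i j := (i.val < k ∧ k ≤ j.val) ∨ (j.val < k ∧ k ≤ i.val)
  symm := ⟨by rintro i j (h | h); exacts [Or.inr h, Or.inl h]⟩
  loopless := ⟨by rintro i (h | h) <;> omega⟩

instance : DecidableRel (biG k).Adj := fun _ _ => instDecidableOr

def Lf (k : ℕ) (m : Fin k) : Fin (2*k) := ⟨m.val, by omega⟩
def Rf (k : ℕ) (m : Fin k) : Fin (2*k) := ⟨k + m.val, by omega⟩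
def Lside (k : ℕ) : Finset (Fin (2*k)) := Finset.univ.image (Lf k)
def Rside (k : ℕ) : Finset (Fin (2*k)) := Finset.univ.image (Rf k)

lemma Lside_card : (Lside k).card = k := by
  rw [Lside, Finset.card_image_of_injective _ (fun a b h => by
    simpa [Lf, Fin.ext_iff] using h), Finset.card_univ, Fintype.card_fin]

lemma Rside_card : (Rside k).card = k := by
  rw [Rside, Finset.card_image_of_injective _ (fun a b h => by
    simp only [Rf, Fin.ext_iff] at h ⊢
    omega), Finset.card_univ, Fintype.card_fin]

lemma mem_Lside {x : Fin (2*k)} : x ∈ Lside k ↔ x.val < k := by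
  rw [Lside, Finset.mem_image]
  constructor
  · rintro ⟨m, -, rfl⟩; exact m.isLt
  · intro h; exact ⟨⟨x.val, h⟩, Finset.mem_univ _, Fin.ext rfl⟩

lemma mem_Rside {x : Fin (2*k)} : x ∈ Rside k ↔ k ≤ x.val := by
  rw [Rside, Finset.mem_image]
  constructor
  · rintro ⟨m, -, rfl⟩
    show k ≤ k + m.val
    omega
  · intro h
    have := x.isLt
    refine ⟨⟨x.val - k, by omega⟩, Finset.mem_univ _, Fin.ext ?_⟩
    show k + (x.val - k) = x.val
    omega

lemma Lside_indep : ∀ x ∈ Lside k, ∀ y ∈ Lside k, x ≠ y → ¬ (biG k).Adj x y := by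
  intro x hx y hy _ hadj
  rw [mem_Lside] at hx hy
  rcases hadj with ⟨-, h⟩ | ⟨-, h⟩ <;> omega

lemma Rside_indep : ∀ x ∈ Rside k, ∀ y ∈ Rside k, x ≠ y → ¬ (biG k).Adj x y := by
  intro x hx y hy _ hadj
  rw [mem_Rside] at hx hy
  rcases hadj with ⟨h, -⟩ | ⟨h, -⟩ <;> omega

lemma biG_indep_card {s : Finset (Fin (2*k))}
    (hs : ∀ x ∈ s, ∀ y ∈ s, x ≠ y → ¬ (biG k).Adj x y) : s.card ≤ k := by
  by_cases h : ∀ x ∈ s, x.val < k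
  · have : s ⊆ Lside k := fun x hx => mem_Lside.mpr (h x hx)
    exact (Finset.card_le_card this).trans_eq Lside_card
  · push_neg at h
    obtain ⟨b, hb, hbk⟩ := h
    have : s ⊆ Rside k := by
      intro x hx
      rw [mem_Rside]
      by_contra hxk
      push_neg at hxk
      have hne : x ≠ b := fun h => by rw [h] at hxk; omega
      exact hs x hx b hb hne (Or.inl ⟨hxk, by omega⟩)
    exact (Finset.card_le_card this).trans_eq Rside_card

lemma biG_indepNum : _root_.indepNum (biG k) = k := by
  apply le_antisymm
  · obtain ⟨s, h1, h2⟩ := indepNum_spec (biG k)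
    exact h1 ▸ biG_indep_card h2
  · calc k = (Lside k).card := Lside_card.symm
    _ ≤ _root_.indepNum (biG k) := le_indepNum _ Lside_indep

lemma biG_stable (v : Fin (2*k)) : indepNumOn (biG k) ({v} : Set (Fin (2*k)))ᶜ = k := by
  apply le_antisymm
  · exact le_trans (indepNumOn_le_indepNum _ _) (le_of_eq biG_indepNum)
  · by_cases hv : v.val < k
    · calc k = (Rside k).card := Rside_card.symm
      _ ≤ _ := by
          refine le_indepNumOn _ ?_ Rside_indep
          intro x hx
          have hx : x ∈ Rside k := by exact_mod_cast hx
          rw [mem_Rside] at hx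
          simp only [Set.mem_compl_iff, Set.mem_singleton_iff]
          rintro rfl
          omega
    · calc k = (Lside k).card := Lside_card.symm
      _ ≤ _ := by
          refine le_indepNumOn _ ?_ Lside_indep
          intro x hx
          have hx : x ∈ Lside k := by exact_mod_cast hx
          rw [mem_Lside] at hx
          simp only [Set.mem_compl_iff, Set.mem_singleton_iff]
          rintro rfl
          omega

lemma biG_degree (v : Fin (2*k)) : (biG k).degree v = k := by
  by_cases hv : v.val < k
  · have : (biG k).neighborFinset v = Rside k := by
      ext j
      rw [SimpleGraph.mem_neighborFinset, mem_Rside]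
      constructor
      · rintro (⟨-, h⟩ | ⟨-, h⟩) <;> omega
      · intro h; exact Or.inl ⟨hv, h⟩
    rw [SimpleGraph.degree, this, Rside_card]
  · have : (biG k).neighborFinset v = Lside k := by
      ext j
      rw [SimpleGraph.mem_neighborFinset, mem_Lside]
      constructor
      · rintro (⟨h, -⟩ | ⟨h, -⟩) <;> omega
      · intro h; exact Or.inr ⟨h, by omega⟩
    rw [SimpleGraph.degree, this, Lside_card]

lemma biG_edges : (biG k).edgeSet.ncard = k ^ 2 := by
  classical
  have hncard : (biG k).edgeSet.ncard = (biG k).edgeFinset.card := by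
    rw [← SimpleGraph.coe_edgeFinset, Set.ncard_coe_finset]
  have hhs := (biG k).sum_degrees_eq_twice_card_edges
  have hsum : ∑ v : Fin (2*k), (biG k).degree v = (2*k)*k := by
    rw [Finset.sum_congr rfl (fun v _ => biG_degree v)]
    simp [Finset.card_univ, mul_comm]
  have h3 : 2 * (biG k).edgeFinset.card = 2 * (k*k) := by
    rw [← hhs, hsum]; ring
  have h4 := Nat.eq_of_mul_eq_mul_left (by norm_num) h3
  rw [hncard, h4, pow_two]

end Constr

theorem tight_one_zero_edge_bounds {V : Type*} [Fintype V] (G : SimpleGraph V) (k : ℕ)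
    (hcard : Fintype.card V = 2 * k) (halpha : _root_.indepNum G = k)
    (hstable : ∀ v : V, indepNumOn G ({v} : Set V)ᶜ = k) :
    (k ≤ G.edgeSet.ncard ∧ G.edgeSet.ncard ≤ k ^ 2) ∧
    (∃ G₁ : SimpleGraph (Fin (2 * k)), _root_.indepNum G₁ = k ∧
      (∀ v, indepNumOn G₁ ({v} : Set (Fin (2 * k)))ᶜ = k) ∧ G₁.edgeSet.ncard = k) ∧
    (∃ G₂ : SimpleGraph (Fin (2 * k)), _root_.indepNum G₂ = k ∧
      (∀ v, indepNumOn G₂ ({v} : Set (Fin (2 * k)))ᶜ = k) ∧ G₂.edgeSet.ncard = k ^ 2) := by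
  classical
  exact ⟨edge_bounds hcard halpha hstable,
    ⟨matchG k, matchG_indepNum, matchG_stable, matchG_edges⟩,
    ⟨biG k, biG_indepNum, biG_stable, biG_edges⟩⟩
end
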